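/- For every ε > 0 there exists N such that for all n ≥ N, the Dushnik–Miller dimension of the divisibility poset on {1,…,n} is at most (4 + ε)·(log n)²/(log log n). -/

import Mathlib

open Finset Filter

section Aux

lemma cover_lemma (N m D : ℕ) (J : Finset (Fin N × Finset (Fin N)))
    (hJ : ∀ j ∈ J, j.1 ∉ j.2 ∧ j.2.card ≤ m) (hmN : m < N)
    (hcount : J.card * ((m+1)^N - m^m*(m+1)^(N-1-m))^D < ((m+1)^N)^D) :
    ∃ W : Fin D → (Fin N → Fin (m+1)),
      ∀ j ∈ J, ∃ d : Fin D, W d j.1 = 0 ∧ ∀ q ∈ j.2, W d q ≠ 0 := by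
  classical
  set M : ℕ := (m+1)^N with hM
  set K : ℕ := m^m*(m+1)^(N-1-m) with hK
  set Ω : Type := Fin N → Fin (m+1) with hΩ
  have hcardΩ : Fintype.card Ω = M := by
    simp [hΩ, hM, Fintype.card_fun]
  let cov : Ω → Fin N × Finset (Fin N) → Prop := fun ω j => ω j.1 = 0 ∧ ∀ q ∈ j.2, ω q ≠ 0
  have hcov : ∀ j ∈ J, K ≤ (univ.filter (fun ω : Ω => cov ω j)).card := by
    intro j hj
    obtain ⟨hpT, hTm⟩ := hJ j hj
    set t : Fin N → Finset (Fin (m+1)) :=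
      fun i => if i = j.1 then {0} else if i ∈ j.2 then {0}ᶜ else univ with ht
    have hsub : Fintype.piFinset t ⊆ univ.filter (fun ω : Ω => cov ω j) := by
      intro ω hω
      rw [Fintype.mem_piFinset] at hω
      simp only [mem_filter, mem_univ, true_and]
      constructor
      · have := hω j.1
        simpa [ht] using this
      · intro q hq
        have hqne : q ≠ j.1 := fun h => hpT (h ▸ hq)
        have := hω q
        simp [ht, hqne, hq] at this
        simpa using this
    have hcard : (Fintype.piFinset t).card = m ^ j.2.card * (m+1) ^ (N - 1 - j.2.card) := by
      rw [Fintype.card_piFinset]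
      have hc : ∀ i, (t i).card = if i = j.1 then 1 else if i ∈ j.2 then m else m+1 := by
        intro i
        by_cases h1 : i = j.1 <;> by_cases h2 : i ∈ j.2 <;>
          simp [ht, h1, h2, Finset.card_compl]
      calc ∏ i : Fin N, (t i).card
          = ∏ i : Fin N, (if i = j.1 then 1 else if i ∈ j.2 then m else m+1) :=
            Finset.prod_congr rfl fun i _ => hc i
        _ = m ^ j.2.card * (m+1) ^ (N - 1 - j.2.card) := by
            rw [← Finset.prod_mul_prod_compl (insert j.1 j.2)]
            have e1 : ∀ i ∈ j.2, (if i = j.1 then 1 else if i ∈ j.2 then m else m+1) = m := by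
              intro i hi
              have hne : i ≠ j.1 := fun h => hpT (h ▸ hi)
              simp [hne, hi]
            have h1 : ∏ i ∈ insert j.1 j.2, (if i = j.1 then 1 else if i ∈ j.2 then m else m+1)
                = m ^ j.2.card := by
              rw [Finset.prod_insert hpT, Finset.prod_congr rfl e1, Finset.prod_const]
              simp
            have e2 : ∀ i ∈ (insert j.1 j.2)ᶜ,
                (if i = j.1 then 1 else if i ∈ j.2 then m else m+1) = m+1 := by
              intro i hi
              simp only [Finset.mem_compl, Finset.mem_insert, not_or] at hi
              simp [hi.1, hi.2]
            have h2 : ∏ i ∈ (insert j.1 j.2)ᶜ, (if i = j.1 then 1 else if i ∈ j.2 then m else m+1)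
                = (m+1) ^ (N - 1 - j.2.card) := by
              rw [Finset.prod_congr rfl e2, Finset.prod_const, Finset.card_compl,
                Finset.card_insert_of_notMem hpT, Fintype.card_fin]
              congr 1
              have : j.2.card < N := lt_of_le_of_lt hTm hmN
              omega
            rw [h1, h2]
    have hmono : K ≤ m ^ j.2.card * (m+1) ^ (N - 1 - j.2.card) := by
      rw [hK]
      have h1 : N - 1 - j.2.card = (m - j.2.card) + (N - 1 - m) := by omega
      rw [h1, pow_add, ← mul_assoc]
      have h2 : m^m ≤ m ^ j.2.card * (m+1) ^ (m - j.2.card) := by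
        calc m^m = m ^ j.2.card * m ^ (m - j.2.card) := by rw [← pow_add]; congr 1; omega
          _ ≤ m ^ j.2.card * (m+1) ^ (m - j.2.card) :=
            Nat.mul_le_mul_left _ (Nat.pow_le_pow_left (Nat.le_succ m) _)
      exact Nat.mul_le_mul_right _ h2
    calc K ≤ (Fintype.piFinset t).card := by rw [hcard]; exact hmono
      _ ≤ _ := Finset.card_le_card hsub
  set Bad : Finset (Fin D → Ω) :=
    univ.filter (fun W => ∃ j ∈ J, ∀ d : Fin D, ¬ cov (W d) j) with hBad
  have hBadcard : Bad.card < Fintype.card (Fin D → Ω) := by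
    have hsub : Bad ⊆ J.biUnion (fun j => Fintype.piFinset
        (fun _ : Fin D => univ.filter (fun ω : Ω => ¬ cov ω j))) := by
      intro W hW
      rw [hBad, mem_filter] at hW
      obtain ⟨-, j, hj, hjW⟩ := hW
      exact Finset.mem_biUnion.2 ⟨j, hj, Fintype.mem_piFinset.2 fun d => by
        simp [hjW d]⟩
    calc Bad.card ≤ ∑ j ∈ J, (Fintype.piFinset
          (fun _ : Fin D => univ.filter (fun ω : Ω => ¬ cov ω j))).card :=
        le_trans (Finset.card_le_card hsub) (Finset.card_biUnion_le)
      _ ≤ ∑ _j ∈ J, (M - K)^D := by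
          apply Finset.sum_le_sum
          intro j hj
          rw [Fintype.card_piFinset]
          have hle : (univ.filter (fun ω : Ω => ¬ cov ω j)).card ≤ M - K := by
            have h1 := hcov j hj
            have h2 := Finset.card_filter_add_card_filter_not
              (s := (univ : Finset Ω)) (p := fun ω => cov ω j)
            rw [Finset.card_univ, hcardΩ] at h2
            omega
          calc ∏ _d : Fin D, (univ.filter (fun ω : Ω => ¬ cov ω j)).card
              ≤ ∏ _d : Fin D, (M - K) := Finset.prod_le_prod' (fun d _ => hle)
            _ = (M-K)^D := by rw [Finset.prod_const]; simp
      _ = J.card * (M-K)^D := by rw [Finset.sum_const, smul_eq_mul]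
      _ < M^D := hcount
      _ = Fintype.card (Fin D → Ω) := by rw [Fintype.card_fun, hcardΩ]; simp
  have hex : ∃ W, W ∉ Bad := by
    by_contra h
    push_neg at h
    have : Bad = univ := Finset.eq_univ_iff_forall.2 h
    rw [this, Finset.card_univ] at hBadcard
    exact lt_irrefl _ hBadcard
  obtain ⟨W, hW⟩ := hex
  refine ⟨W, ?_⟩
  intro j hj
  rw [hBad, mem_filter] at hW
  push_neg at hW
  obtain ⟨d, hd⟩ := hW (mem_univ W) j hj
  exact ⟨d, hd⟩

lemma embed_lemma (n B D m : ℕ) (hB : 2 ≤ B) (hn : 1 ≤ n)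
    (hlog : Nat.log B n ≤ m) (hmn : m ≤ n)
    (hcount : n^2 * ((m+1)^(n+1) - m^m*(m+1)^(n+1-1-m))^D < ((m+1)^(n+1))^D) :
    ∃ f : ℕ → Fin (B+D) → ℝ,
      ∀ a ∈ Set.Icc 1 n, ∀ b ∈ Set.Icc 1 n, (f a ≤ f b ↔ a ∣ b) := by
  classical
  -- large prime support
  set lS : ℕ → Finset (Fin (n+1)) :=
    fun b => univ.filter (fun q : Fin (n+1) => B ≤ (q:ℕ) ∧ (q:ℕ) ∈ b.primeFactors) with hlS
  have hlScard : ∀ b : ℕ, 1 ≤ b → b ≤ n → (lS b).card ≤ m := by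
    intro b hb1 hbn
    set T' : Finset ℕ := (lS b).image Fin.val with hT'
    have hcards : T'.card = (lS b).card := Finset.card_image_of_injective _ Fin.val_injective
    have hsubpf : T' ⊆ b.primeFactors := by
      intro q hq
      simp only [hT', hlS, Finset.mem_image, Finset.mem_filter, Finset.mem_univ, true_and] at hq
      obtain ⟨q', ⟨-, hq'⟩, rfl⟩ := hq
      exact hq'
    have hdvd : (∏ q ∈ T', q) ∣ b :=
      dvd_trans (Finset.prod_dvd_prod_of_subset _ _ _ hsubpf) (Nat.prod_primeFactors_dvd b)
    have hprodle : (∏ q ∈ T', q) ≤ n := le_trans (Nat.le_of_dvd hb1 hdvd) hbn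
    have hpow : B ^ T'.card ≤ ∏ q ∈ T', q := by
      apply Finset.pow_card_le_prod
      intro q hq
      simp only [hT', hlS, Finset.mem_image, Finset.mem_filter, Finset.mem_univ, true_and] at hq
      obtain ⟨q', ⟨hq'B, -⟩, rfl⟩ := hq
      exact hq'B
    have := (Nat.le_log_iff_pow_le (by omega) (by omega)).2 (le_trans hpow hprodle)
    omega
  -- the pair function
  set g : ℕ → ℕ → Fin (n+1) × Finset (Fin (n+1)) := fun a b =>
    if h : ∃ p, B ≤ p ∧ p ≤ n ∧ b.factorization p < a.factorization p then
      (⟨h.choose, Nat.lt_succ_of_le h.choose_spec.2.1⟩,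
        (lS b).erase ⟨h.choose, Nat.lt_succ_of_le h.choose_spec.2.1⟩)
    else (⟨0, Nat.succ_pos n⟩, ∅) with hg
  set J : Finset (Fin (n+1) × Finset (Fin (n+1))) :=
    (Finset.Icc 1 n ×ˢ Finset.Icc 1 n).image (fun ab => g ab.1 ab.2) with hJdef
  have hJ : ∀ j ∈ J, j.1 ∉ j.2 ∧ j.2.card ≤ m := by
    intro j hj
    rw [hJdef, Finset.mem_image] at hj
    obtain ⟨ab, hab, rfl⟩ := hj
    rw [Finset.mem_product, Finset.mem_Icc, Finset.mem_Icc] at hab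
    rw [hg]
    by_cases h : ∃ p, B ≤ p ∧ p ≤ n ∧ ab.2.factorization p < ab.1.factorization p
    · simp only [dif_pos h]
      refine ⟨Finset.notMem_erase _ _, ?_⟩
      exact le_trans (le_trans (Finset.card_erase_le) (le_refl _)) (hlScard ab.2 hab.2.1 hab.2.2)
    · simp [dif_neg h]
  have hJcard : J.card ≤ n^2 := by
    calc J.card ≤ ((Finset.Icc 1 n) ×ˢ (Finset.Icc 1 n)).card := Finset.card_image_le
      _ = n^2 := by rw [Finset.card_product, Nat.card_Icc]; simp; ring
  obtain ⟨W, hW⟩ := cover_lemma (n+1) m D J hJ (by omega)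
    (lt_of_le_of_lt (Nat.mul_le_mul_right _ hJcard) hcount)
  -- the embedding
  refine ⟨fun x i =>
    if hi : (i : ℕ) < B then (x.factorization i : ℝ)
    else ∑ q : Fin (n+1),
      (if B ≤ (q:ℕ) ∧ W ⟨(i:ℕ) - B, by have := i.isLt; omega⟩ q = 0
        then (x.factorization q : ℝ) else 0), ?_⟩
  intro a ha b hb
  rw [Set.mem_Icc] at ha hb
  have ha0 : a ≠ 0 := by omega
  have hb0 : b ≠ 0 := by omega
  constructor
  · -- f a ≤ f b → a ∣ b
    intro hle
    by_contra hndvd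
    have hnle : ¬ a.factorization ≤ b.factorization :=
      fun h => hndvd ((Nat.factorization_le_iff_dvd ha0 hb0).1 h)
    rw [Finsupp.le_def, not_forall] at hnle
    obtain ⟨p, hp⟩ := hnle
    rw [not_le] at hp
    have hpa : a.factorization p ≠ 0 := by omega
    have hpn : p ≤ n := le_trans (Nat.le_of_dvd (by omega) (Nat.dvd_of_factorization_pos hpa)) ha.2
    by_cases hpB : p < B
    · -- small coordinate
      have hiB : p < B + D := by omega
      have := hle ⟨p, hiB⟩
      simp only [dif_pos hpB] at this
      rw [Nat.cast_le] at this
      omega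
    · -- large coordinate via cover
      push_neg at hpB
      have hex : ∃ p, B ≤ p ∧ p ≤ n ∧ b.factorization p < a.factorization p := ⟨p, hpB, hpn, hp⟩
      have hmemJ : g a b ∈ J := by
        rw [hJdef, Finset.mem_image]
        exact ⟨(a, b), by rw [Finset.mem_product, Finset.mem_Icc, Finset.mem_Icc]; omega, rfl⟩
      have hgab : g a b = (⟨hex.choose, Nat.lt_succ_of_le hex.choose_spec.2.1⟩,
          (lS b).erase ⟨hex.choose, Nat.lt_succ_of_le hex.choose_spec.2.1⟩) := by
        rw [hg]; exact dif_pos hex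
      obtain ⟨d, hd0, hdT⟩ := hW _ hmemJ
      rw [hgab] at hd0 hdT
      simp only at hd0 hdT
      set p' : ℕ := hex.choose with hp'
      obtain ⟨hp'B, hp'n, hp'lt⟩ := hex.choose_spec
      set pf : Fin (n+1) := ⟨p', Nat.lt_succ_of_le hp'n⟩ with hpf
      have hiB2 : B + (d:ℕ) < B + D := by have := d.isLt; omega
      have hkey := hle ⟨B + (d:ℕ), hiB2⟩
      simp only at hkey
      have hcond : ¬ (B + (d:ℕ) < B) := by omega
      have hfin : ∀ h : B + (d:ℕ) - B < D, (⟨B + (d:ℕ) - B, h⟩ : Fin D) = d := by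
        intro h; apply Fin.ext; simp
      simp only [dif_neg hcond, hfin] at hkey
      -- sum for b equals factorization b p'
      have hsb : ∑ q : Fin (n+1),
          (if B ≤ (q:ℕ) ∧ W d q = 0 then (b.factorization q : ℝ) else 0)
          = (b.factorization p' : ℝ) := by
        rw [Finset.sum_eq_single_of_mem pf (Finset.mem_univ pf)]
        · rw [if_pos ⟨hp'B, hd0⟩]
        · intro q _ hq
          split_ifs with hcond
          · obtain ⟨hqB, hqW⟩ := hcond
            by_contra hne
            have hfq : b.factorization (q:ℕ) ≠ 0 := fun h => hne (by rw [h]; simp)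
            have hqpf : (q:ℕ) ∈ b.primeFactors := by
              rw [← Nat.support_factorization, Finsupp.mem_support_iff]; exact hfq
            have hqlS : q ∈ lS b := by
              rw [hlS]; simp only [Finset.mem_filter, Finset.mem_univ, true_and]
              exact ⟨hqB, hqpf⟩
            exact hdT q (Finset.mem_erase.2 ⟨hq, hqlS⟩) hqW
          · rfl
      have hsa : (a.factorization p' : ℝ) ≤ ∑ q : Fin (n+1),
          (if B ≤ (q:ℕ) ∧ W d q = 0 then (a.factorization q : ℝ) else 0) := by
        have : (if B ≤ (pf:ℕ) ∧ W d pf = 0 then (a.factorization (pf:ℕ) : ℝ) else 0)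
            = (a.factorization p' : ℝ) := by rw [if_pos ⟨hp'B, hd0⟩]
        rw [← this]
        apply Finset.single_le_sum (f := fun q : Fin (n+1) =>
          (if B ≤ (q:ℕ) ∧ W d q = 0 then (a.factorization (q:ℕ) : ℝ) else 0))
          (fun q _ => by split_ifs with h; exacts [Nat.cast_nonneg _, le_rfl])
          (Finset.mem_univ pf)
      rw [hsb] at hkey
      have hfinal : (a.factorization p' : ℝ) ≤ (b.factorization p' : ℝ) := le_trans hsa hkey
      rw [Nat.cast_le] at hfinal
      have hlt2 : b.factorization p' < a.factorization p' := hp'lt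
      omega
  · -- a ∣ b → f a ≤ f b
    intro hdvd i
    have hfact : ∀ q, a.factorization q ≤ b.factorization q := by
      intro q
      exact (Nat.factorization_le_iff_dvd ha0 hb0).2 hdvd q
    by_cases hi : (i:ℕ) < B
    · simp only [dif_pos hi]
      exact_mod_cast hfact i
    · simp only [dif_neg hi]
      apply Finset.sum_le_sum
      intro q _
      split_ifs
      · exact_mod_cast hfact q
      · exact le_refl 0

lemma count_lemma (n m D : ℕ) (hn : 1 ≤ n) (hmn : m ≤ n) (hD1 : 1 ≤ D)
    (hD : Real.exp 1 * (m+1) * (2*Real.log n+1) ≤ D) :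
    n^2 * ((m+1)^(n+1) - m^m*(m+1)^(n+1-1-m))^D < ((m+1)^(n+1))^D := by
  have hexp : n+1-1-m = n-m := by omega
  rw [hexp]
  set M : ℕ := (m+1)^(n+1) with hM
  set K : ℕ := m^m*(m+1)^(n-m) with hK
  have hM0 : 0 < M := Nat.pow_pos (Nat.succ_pos m)
  have hKM : K ≤ M := by
    rw [hK, hM]
    calc m^m*(m+1)^(n-m) ≤ (m+1)^(m+1)*(m+1)^(n-m) :=
        Nat.mul_le_mul_right _ (le_trans (Nat.pow_le_pow_left (Nat.le_succ m) m)
          (Nat.pow_le_pow_right (Nat.succ_pos m) (Nat.le_succ m)))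
      _ = (m+1)^((m+1)+(n-m)) := (pow_add _ _ _).symm
      _ = (m+1)^(n+1) := by congr 1; omega
  -- go to the reals
  rw [hM, hK] at hKM ⊢
  rw [← Nat.cast_lt (α := ℝ)]
  push_cast [Nat.cast_sub hKM]
  set δ : ℝ := (m:ℝ)^m/((m:ℝ)+1)^(m+1) with hδ
  have hMR : (0:ℝ) < ((m:ℝ)+1)^(n+1) := by positivity
  have hKR : ((m:ℝ)^m*((m:ℝ)+1)^(n-m)) = δ * ((m:ℝ)+1)^(n+1) := by
    rw [hδ]
    have h1 : ((m:ℝ)+1)^(n+1) = ((m:ℝ)+1)^(m+1) * ((m:ℝ)+1)^(n-m) := by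
      rw [← pow_add]; congr 1; omega
    field_simp
    rw [h1]; ring
  rw [hKR]
  have h2 : ((m:ℝ)+1)^(n+1) - δ * ((m:ℝ)+1)^(n+1) = (1-δ) * ((m:ℝ)+1)^(n+1) := by ring
  rw [h2, mul_pow]
  have hδ1 : δ ≤ 1 := by
    rw [hδ, div_le_one (by positivity)]
    calc (m:ℝ)^m ≤ ((m:ℝ)+1)^m := by
          apply pow_le_pow_left₀ (Nat.cast_nonneg m); linarith
      _ ≤ ((m:ℝ)+1)^(m+1) := by
          apply pow_le_pow_right₀ ?_ (Nat.le_succ m)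
          have : (0:ℝ) ≤ m := Nat.cast_nonneg m; linarith
  have hmain : (n:ℝ)^2 * (1-δ)^D < 1 := by
    rcases Nat.eq_zero_or_pos m with hm0 | hm1
    · subst hm0
      have : δ = 1 := by rw [hδ]; norm_num
      rw [this]
      simp only [sub_self]
      rw [zero_pow (by omega)]
      norm_num
    · -- δ ≥ 1/(e(m+1))
      have hδlb : 1/(Real.exp 1 * ((m:ℝ)+1)) ≤ δ := by
        rw [hδ]
        have hmpos : (0:ℝ) < m := by exact_mod_cast hm1
        have h3 : ((m:ℝ)+1)^(m+1) = ((m:ℝ)+1)^m * ((m:ℝ)+1) := by rw [pow_succ]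
        rw [h3]
        rw [div_le_div_iff₀ (by positivity) (by positivity)]
        have h4 : ((m:ℝ)+1)^m ≤ Real.exp 1 * (m:ℝ)^m := by
          have h5 : ((m:ℝ)+1)^m = (m:ℝ)^m * (1 + 1/(m:ℝ))^m := by
            rw [← mul_pow]; congr 1; field_simp
          rw [h5]
          have h6 : (1 + 1/(m:ℝ))^m ≤ Real.exp 1 := by
            have h7 : (1:ℝ) + 1/(m:ℝ) ≤ Real.exp (1/(m:ℝ)) := by
              have := Real.add_one_le_exp (1/(m:ℝ)); linarith
            calc (1 + 1/(m:ℝ))^m ≤ (Real.exp (1/(m:ℝ)))^m := by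
                  apply pow_le_pow_left₀ (by positivity) h7
              _ = Real.exp ((1/(m:ℝ)) * m) := by
                  rw [← Real.exp_nat_mul]; ring_nf
              _ = Real.exp 1 := by
                  congr 1; field_simp
            
          calc (m:ℝ)^m * (1 + 1/(m:ℝ))^m ≤ (m:ℝ)^m * Real.exp 1 := by
                apply mul_le_mul_of_nonneg_left h6 (by positivity)
            _ = Real.exp 1 * (m:ℝ)^m := by ring
        calc 1 * (((m:ℝ)+1)^m * ((m:ℝ)+1)) = ((m:ℝ)+1)^m * ((m:ℝ)+1) := by ring
          _ ≤ (Real.exp 1 * (m:ℝ)^m) * ((m:ℝ)+1) := by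
              apply mul_le_mul_of_nonneg_right h4 (by positivity)
          _ = (m:ℝ)^m * (Real.exp 1 * ((m:ℝ)+1)) := by ring
      have hδpos : 0 < δ := lt_of_lt_of_le (by positivity) hδlb
      have hδD : 2*Real.log n + 1 ≤ δ * D := by
        have h8 : 0 < Real.exp 1 * ((m:ℝ)+1) := by positivity
        calc 2*Real.log n + 1
            = (1/(Real.exp 1 * ((m:ℝ)+1))) * (Real.exp 1 * ((m:ℝ)+1) * (2*Real.log n+1)) := by
              field_simp
          _ ≤ δ * D := by
              apply mul_le_mul hδlb hD ?_ (le_of_lt hδpos)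
              have hL : 0 ≤ Real.log n := Real.log_natCast_nonneg n
              positivity
      have hpow : (1-δ)^D ≤ Real.exp (-(2*Real.log n + 1)) := by
        calc (1-δ)^D ≤ (Real.exp (-δ))^D := by
              apply pow_le_pow_left₀ (by linarith) ?_
              have := Real.add_one_le_exp (-δ); linarith
          _ = Real.exp (-δ * D) := by rw [← Real.exp_nat_mul]; ring_nf
          _ ≤ Real.exp (-(2*Real.log n + 1)) := by
              apply Real.exp_le_exp.2; linarith
      have hn2 : (n:ℝ)^2 = Real.exp (2*Real.log n) := by
        have h0 : (0:ℝ) < n := by exact_mod_cast hn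
        have h1 : Real.exp (((2:ℕ):ℝ) * Real.log n) = (Real.exp (Real.log n))^2 :=
          Real.exp_nat_mul _ 2
        rw [Real.exp_log h0] at h1
        rw [show (2:ℝ)*Real.log n = ((2:ℕ):ℝ) * Real.log n by norm_num, h1]
      calc (n:ℝ)^2 * (1-δ)^D ≤ Real.exp (2*Real.log n) * Real.exp (-(2*Real.log n + 1)) := by
            rw [hn2]
            apply mul_le_mul_of_nonneg_left hpow (by positivity)
        _ = Real.exp (-1) := by rw [← Real.exp_add]; ring_nf
        _ < 1 := by rw [Real.exp_lt_one_iff]; norm_num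
  calc (n:ℝ)^2 * ((1-δ)^D * (((m:ℝ)+1)^(n+1))^D)
      = ((n:ℝ)^2 * (1-δ)^D) * (((m:ℝ)+1)^(n+1))^D := by ring
    _ < 1 * (((m:ℝ)+1)^(n+1))^D := by
        apply mul_lt_mul_of_pos_right hmain (by positivity)
    _ = (((m:ℝ)+1)^(n+1))^D := one_mul _

set_option maxHeartbeats 1000000 in
lemma asym_lemma (ε : ℝ) (hε : 0 < ε) :
    ∀ᶠ x : ℝ in atTop,
      x*Real.sqrt x + 2 + Real.exp 1*((2/3)*(x/Real.log x) + 1)*(2*x+1) + 1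
        ≤ (4+ε) * x^2 / Real.log x := by
  set e : ℝ := Real.exp 1 with he
  have he3 : e < 3 := lt_trans Real.exp_one_lt_d9 (by norm_num)
  have he0 : 0 < e := Real.exp_pos 1
  set c : ℝ := 4 + ε - 4*e/3 with hc
  have hc0 : 0 < c := by rw [hc]; linarith
  have h3 := (isLittleO_log_rpow_atTop (show (0:ℝ) < 1/2 by norm_num)).def
    (show (0:ℝ) < c/8 by positivity)
  have h4 := (isLittleO_log_rpow_atTop (show (0:ℝ) < 1 by norm_num)).def
    (show (0:ℝ) < c/(12*e) by positivity)
  filter_upwards [eventually_ge_atTop (3:ℝ), eventually_ge_atTop (8*e/(3*c)), h3, h4]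
    with x hx1 hx2 hx3 hx4
  have hx0 : (0:ℝ) < x := by linarith
  have hlog1 : 1 ≤ Real.log x := by
    rw [Real.le_log_iff_exp_le hx0]; linarith [he3]
  have hlogpos : 0 < Real.log x := by linarith
  have hsq : Real.sqrt x * Real.sqrt x = x := Real.mul_self_sqrt (le_of_lt hx0)
  have hsq1 : 1 ≤ Real.sqrt x := by
    rw [show (1:ℝ) = Real.sqrt 1 by simp]
    exact Real.sqrt_le_sqrt (by linarith)
  have h3' : Real.log x ≤ (c/8) * Real.sqrt x := by
    rw [Real.norm_eq_abs, Real.norm_eq_abs, abs_of_nonneg (by linarith : (0:ℝ) ≤ Real.log x),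
      abs_of_nonneg (Real.rpow_nonneg (le_of_lt hx0) _)] at hx3
    rwa [← Real.sqrt_eq_rpow] at hx3
  have h4' : Real.log x ≤ (c/(12*e)) * x := by
    rw [Real.norm_eq_abs, Real.norm_eq_abs, abs_of_nonneg (by linarith : (0:ℝ) ≤ Real.log x),
      abs_of_nonneg (Real.rpow_nonneg (le_of_lt hx0) _)] at hx4
    rwa [Real.rpow_one] at hx4
  have hA0 : 0 < x^2 / Real.log x := by positivity
  have hxsx : 3 ≤ x * Real.sqrt x := by
    calc (3:ℝ) = 3 * 1 := by norm_num
      _ ≤ x * Real.sqrt x := mul_le_mul hx1 hsq1 (by norm_num) (le_of_lt hx0)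
  have c1 : x*Real.sqrt x + 3 ≤ (c/4) * (x^2 / Real.log x) := by
    rw [show (c/4) * (x^2 / Real.log x) = ((c/4)*x^2)/Real.log x by ring, le_div_iff₀ hlogpos]
    have e1 : x*Real.sqrt x + 3 ≤ 2*(x*Real.sqrt x) := by linarith
    calc (x*Real.sqrt x + 3) * Real.log x ≤ (2*(x*Real.sqrt x)) * Real.log x :=
        mul_le_mul_of_nonneg_right e1 (le_of_lt hlogpos)
      _ ≤ (2*(x*Real.sqrt x)) * ((c/8)*Real.sqrt x) :=
        mul_le_mul_of_nonneg_left h3' (by nlinarith)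
      _ = (c/4)*(x*(Real.sqrt x*Real.sqrt x)) := by ring
      _ = (c/4)*x^2 := by rw [hsq]; ring
  have c2 : (2*e/3)*(x/Real.log x) ≤ (c/4) * (x^2 / Real.log x) := by
    rw [show (2*e/3)*(x/Real.log x) = ((2*e/3)*x)/Real.log x by ring,
      show (c/4) * (x^2 / Real.log x) = ((c/4)*x^2)/Real.log x by ring,
      div_le_div_iff_of_pos_right hlogpos]
    have hq : (c/4)*(8*e/(3*c)) = 2*e/3 := by field_simp; ring
    have key : (2*e/3)*x ≤ (c/4)*x^2 := by
      calc (2*e/3)*x = ((c/4)*(8*e/(3*c)))*x := by rw [hq]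
        _ ≤ ((c/4)*x)*x := mul_le_mul_of_nonneg_right
            (mul_le_mul_of_nonneg_left hx2 (by positivity)) (le_of_lt hx0)
        _ = (c/4)*x^2 := by ring
    exact key
  have c3 : e*(2*x+1) ≤ (c/4) * (x^2 / Real.log x) := by
    rw [show (c/4) * (x^2 / Real.log x) = ((c/4)*x^2)/Real.log x by ring, le_div_iff₀ hlogpos]
    have e1 : e*(2*x+1) ≤ 3*e*x := by nlinarith
    calc e*(2*x+1) * Real.log x ≤ (3*e*x) * Real.log x :=
        mul_le_mul_of_nonneg_right e1 (le_of_lt hlogpos)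
      _ ≤ (3*e*x) * ((c/(12*e))*x) := mul_le_mul_of_nonneg_left h4' (by positivity)
      _ = (c/4)*x^2 := by field_simp; ring
  have hexpand : x*Real.sqrt x + 2 + e*((2/3)*(x/Real.log x) + 1)*(2*x+1) + 1
      = (x*Real.sqrt x + 3) + ((4*e/3)*(x^2/Real.log x) + (2*e/3)*(x/Real.log x)
        + e*(2*x+1)) := by
    field_simp
    ring
  have hfin : (3*(c/4) + 4*e/3) * (x^2/Real.log x) ≤ (4+ε) * (x^2/Real.log x) := by
    apply mul_le_mul_of_nonneg_right ?_ (le_of_lt hA0)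
    rw [hc]; linarith
  rw [hexpand, show (4+ε)*x^2/Real.log x = (4+ε)*(x^2/Real.log x) from mul_div_assoc _ _ _]
  linarith [c1, c2, c3, hfin]

end Aux

/-- The Dushnik-Miller dimension of the divisibility poset on a set `S ⊆ ℕ`:
the least `d` such that there is an order embedding of `(S, ∣)` into `ℝ^d`
with the componentwise order. -/
noncomputable def divDim (S : Set ℕ) : ℕ :=
  sInf {d : ℕ | ∃ f : ℕ → (Fin d → ℝ), ∀ a ∈ S, ∀ b ∈ S, (f a ≤ f b ↔ a ∣ b)}

/-- Upper bound: `dim(D_{[n]}) ≤ (4 + ε) (log n)² / log log n` for large `n`. -/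
theorem divDim_Icc_upper_bound :
    ∀ ε : ℝ, 0 < ε → ∃ N : ℕ, ∀ n : ℕ, N ≤ n →
      (divDim (Set.Icc 1 n) : ℝ)
        ≤ (4 + ε) * (Real.log n) ^ 2 / Real.log (Real.log n) := by
  intro ε hε
  set Bf : ℕ → ℕ := fun n => max 2 ⌈Real.log n * Real.sqrt (Real.log n)⌉₊ with hBf
  set mf : ℕ → ℕ := fun n => Nat.log (Bf n) n with hmf
  set Df : ℕ → ℕ := fun n =>
    max 1 ⌈Real.exp 1 * ((mf n : ℝ)+1) * (2*Real.log n+1)⌉₊ with hDf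
  -- dimension bound for all n ≥ 1
  have hdim : ∀ n : ℕ, 1 ≤ n → divDim (Set.Icc 1 n) ≤ Bf n + Df n := by
    intro n hn
    have hB2 : 2 ≤ Bf n := le_max_left _ _
    have hmn : mf n ≤ n := Nat.log_le_self _ _
    have hD1 : 1 ≤ Df n := le_max_left _ _
    have hDge : Real.exp 1 * ((mf n : ℝ)+1) * (2*Real.log n+1) ≤ (Df n : ℝ) :=
      le_trans (Nat.le_ceil _) (Nat.cast_le.2 (le_max_right _ _))
    obtain ⟨f, hf⟩ := embed_lemma n (Bf n) (Df n) (mf n) hB2 hn le_rfl hmn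
      (count_lemma n (mf n) (Df n) hn hmn hD1 hDge)
    exact Nat.sInf_le ⟨f, hf⟩
  -- eventually, the numeric bound holds
  have hLtop : Tendsto (fun n : ℕ => Real.log n) atTop atTop :=
    Real.tendsto_log_atTop.comp tendsto_natCast_atTop_atTop
  have hasym := hLtop.eventually (asym_lemma ε hε)
  have hfinal : ∀ᶠ n : ℕ in atTop, (divDim (Set.Icc 1 n) : ℝ)
      ≤ (4 + ε) * (Real.log n) ^ 2 / Real.log (Real.log n) := by
    filter_upwards [eventually_ge_atTop 3, hasym] with n hn3 hasymn
    set L : ℝ := Real.log n with hL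
    have hn0 : (0:ℝ) < n := by positivity
    have hL1 : 1 < L := by
      have h3n : (3:ℝ) ≤ (n:ℝ) := by exact_mod_cast hn3
      have he3 : Real.exp 1 < 3 := lt_trans Real.exp_one_lt_d9 (by norm_num)
      have hexp : Real.exp 1 < (n:ℝ) := lt_of_lt_of_le he3 h3n
      exact (Real.lt_log_iff_exp_lt hn0).2 hexp
    have hL0 : (0:ℝ) < L := by linarith
    have hlogL : 0 < Real.log L := Real.log_pos hL1
    have hsL0 : 0 < Real.sqrt L := Real.sqrt_pos.2 hL0
    -- bound on mf
    have hBlow : L * Real.sqrt L ≤ (Bf n : ℝ) := by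
      calc L * Real.sqrt L ≤ (⌈L * Real.sqrt L⌉₊ : ℝ) := Nat.le_ceil _
        _ ≤ (Bf n : ℝ) := Nat.cast_le.2 (le_max_right _ _)
    have hBpos : (0:ℝ) < (Bf n : ℝ) := lt_of_lt_of_le (by positivity) hBlow
    have hlogB : (3/2)*Real.log L ≤ Real.log (Bf n : ℝ) := by
      have h1 : Real.log (L * Real.sqrt L) ≤ Real.log (Bf n : ℝ) :=
        Real.log_le_log (by positivity) hBlow
      rw [Real.log_mul (ne_of_gt hL0) (ne_of_gt hsL0), Real.log_sqrt (le_of_lt hL0)] at h1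
      linarith
    have hm_bound : (mf n : ℝ) ≤ (2/3)*(L/Real.log L) := by
      have hpow : (Bf n)^(mf n) ≤ n := Nat.pow_log_le_self _ (by omega)
      have hpowR : ((Bf n : ℝ))^(mf n) ≤ (n:ℝ) := by exact_mod_cast hpow
      have hlogle : (mf n : ℝ) * Real.log (Bf n : ℝ) ≤ L := by
        rw [← Real.log_pow]
        rw [hL]
        exact Real.log_le_log (by positivity) hpowR
      have h2 : (mf n : ℝ) * ((3/2)*Real.log L) ≤ L := by
        calc (mf n : ℝ) * ((3/2)*Real.log L) ≤ (mf n : ℝ) * Real.log (Bf n : ℝ) :=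
            mul_le_mul_of_nonneg_left hlogB (Nat.cast_nonneg _)
          _ ≤ L := hlogle
      rw [show (2/3)*(L/Real.log L) = L/((3/2)*Real.log L) by field_simp]
      rw [le_div_iff₀ (by positivity)]
      exact h2
    -- upper bounds on Bf and Df
    have hBub : (Bf n : ℝ) ≤ L * Real.sqrt L + 2 := by
      rw [hBf]
      push_cast [Nat.cast_max]
      apply max_le
      · have : (0:ℝ) ≤ L * Real.sqrt L := by positivity
        linarith
      · have := Nat.ceil_lt_add_one (show (0:ℝ) ≤ Real.log n * Real.sqrt (Real.log n) by positivity)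
        rw [← hL] at *
        linarith
    have hy0 : (0:ℝ) ≤ Real.exp 1 * ((mf n : ℝ)+1) * (2*L+1) := by positivity
    have hDub : (Df n : ℝ) ≤ Real.exp 1*((2/3)*(L/Real.log L)+1)*(2*L+1) + 1 := by
      have h1 : (Df n : ℝ) ≤ Real.exp 1 * ((mf n : ℝ)+1) * (2*L+1) + 1 := by
        rw [hDf]
        push_cast [Nat.cast_max]
        apply max_le
        · linarith
        · have := Nat.ceil_lt_add_one hy0
          rw [← hL] at *
          linarith [this]
      have h2 : Real.exp 1 * ((mf n : ℝ)+1) * (2*L+1)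
          ≤ Real.exp 1*((2/3)*(L/Real.log L)+1)*(2*L+1) := by
        apply mul_le_mul_of_nonneg_right ?_ (by linarith)
        apply mul_le_mul_of_nonneg_left ?_ (le_of_lt (Real.exp_pos 1))
        linarith [hm_bound]
      linarith
    -- conclude
    have hdimn : (divDim (Set.Icc 1 n) : ℝ) ≤ (Bf n : ℝ) + (Df n : ℝ) := by
      have := hdim n (by omega)
      exact_mod_cast this
    calc (divDim (Set.Icc 1 n) : ℝ) ≤ (Bf n : ℝ) + (Df n : ℝ) := hdimn
      _ ≤ L*Real.sqrt L + 2 + Real.exp 1*((2/3)*(L/Real.log L) + 1)*(2*L+1) + 1 := by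
          linarith
      _ ≤ (4+ε) * L^2 / Real.log L := hasymn
  obtain ⟨N, hN⟩ := eventually_atTop.1 hfinal
  exact ⟨N, hN⟩
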